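/- In the ear setup, let α ∈ U₁ and β ∈ U₂, let K be a semifield and f : diag(P) → K any map. Then the map R defined by R(α,ζ,π₃,…,π_p) = (η,ζ,π₃,…,π_p) is a bijection from {π ∈ T(α→β) : π₂ = ζ and π₃ ≠ η} to {ρ ∈ T(η→β) : ρ₂ = ζ}, and every π in its domain satisfies (f(α,ζ)/f(η,ζ)) · f(R(π)) = f(π). -/

import Mathlib

/-!
Common definitions: polygons with vertex set `ZMod n`, crossing of diagonals,
dissections, (weak) friezes with values in a semifield, and T-paths.
-/

/-- A *semifield* in the sense of the paper: a set `K` with a commutative, associative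
addition and a multiplication making `K` a commutative group, such that multiplication
distributes over addition.  (There is no zero and no subtraction.) -/
class PaperSemifield (K : Type*) extends CommGroup K, AddCommSemigroup K where
  mul_add' : ∀ a b c : K, a * (b + c) = a * b + a * c

/-- Position of the vertex `x` of the `n`-gon relative to the vertex `a`, going around
the polygon in the positive direction; `relPos n a x = 0` iff `x = a`. -/
def relPos (n : ℕ) (a x : ZMod n) : ℕ := (x - a).val

/-- The vertices `a, b, c, d` of the `n`-gon appear strictly in this cyclic order. -/
def CyclicallyOrdered (n : ℕ) (a b c d : ZMod n) : Prop :=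
  0 < relPos n a b ∧ relPos n a b < relPos n a c ∧ relPos n a c < relPos n a d

/-- The diagonals `{a,b}` and `{c,d}` of the `n`-gon *cross*: the four vertices are
distinct and appear in the cyclic order `a, c, b, d` or `a, d, b, c`. -/
def Crosses (n : ℕ) (a b c d : ZMod n) : Prop :=
  CyclicallyOrdered n a c b d ∨ CyclicallyOrdered n a d b c

/-- `{a, b}` is an edge of the `n`-gon, i.e. joins neighbouring vertices. -/
def IsEdge (n : ℕ) (a b : ZMod n) : Prop := b = a + 1 ∨ a = b + 1

/-- `{a, b}` is an internal diagonal of the `n`-gon. -/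
def IsInternalDiag (n : ℕ) (a b : ZMod n) : Prop := a ≠ b ∧ ¬ IsEdge n a b

/-- `w'` is the successor of `w` in the induced cyclic order of the subpolygon of the
`n`-gon with vertex set `W`. -/
def NextIn (n : ℕ) (W : Set (ZMod n)) (w w' : ZMod n) : Prop :=
  w ∈ W ∧ w' ∈ W ∧ w' ≠ w ∧ ∀ u ∈ W, relPos n w u = 0 ∨ relPos n w w' ≤ relPos n w u

/-- `D` is a dissection of the subpolygon of the `n`-gon with vertex set `W`: a set of
pairwise non-crossing diagonals of the subpolygon joining non-neighbouring vertices. -/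
def IsDissectionOf (n : ℕ) (W : Set (ZMod n)) (D : Set (Sym2 (ZMod n))) : Prop :=
  (∀ a b, s(a, b) ∈ D → a ∈ W ∧ b ∈ W ∧ a ≠ b ∧ ¬ NextIn n W a b ∧ ¬ NextIn n W b a) ∧
  (∀ a b c d, s(a, b) ∈ D → s(c, d) ∈ D → ¬ Crosses n a b c d)

/-- `D` is a dissection of the `n`-gon. -/
def IsDissection (n : ℕ) (D : Set (Sym2 (ZMod n))) : Prop :=
  IsDissectionOf n Set.univ D

/-- `f` is symmetric on pairs of vertices from `W`, i.e. represents a map defined on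
unordered diagonals of the subpolygon with vertex set `W`. -/
def SymmOn (n : ℕ) {K : Type*} (W : Set (ZMod n)) (f : ZMod n → ZMod n → K) : Prop :=
  ∀ a b, a ∈ W → b ∈ W → f a b = f b a

/-- The Ptolemy relation for `f` at the crossing diagonals `{a,b}` and `{c,d}`. -/
def PtolemyRel {n : ℕ} {K : Type*} [Mul K] [Add K]
    (f : ZMod n → ZMod n → K) (a b c d : ZMod n) : Prop :=
  f a b * f c d = f a c * f b d + f a d * f b c

/-- `f` is a weak frieze on the subpolygon with vertex set `W` with respect to `D`:
the Ptolemy relation holds whenever `{a,b}` and `{c,d}` are crossing diagonals of the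
subpolygon with `{c,d} ∈ D`. -/
def IsWeakFriezeOn (n : ℕ) {K : Type*} [Mul K] [Add K] (W : Set (ZMod n))
    (D : Set (Sym2 (ZMod n))) (f : ZMod n → ZMod n → K) : Prop :=
  ∀ a b c d : ZMod n, a ∈ W → b ∈ W → c ∈ W → d ∈ W →
    Crosses n a b c d → s(c, d) ∈ D → PtolemyRel f a b c d

/-- `f` is a weak frieze on the `n`-gon with respect to the dissection `D`. -/
def IsWeakFrieze (n : ℕ) {K : Type*} [Mul K] [Add K]
    (D : Set (Sym2 (ZMod n))) (f : ZMod n → ZMod n → K) : Prop :=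
  IsWeakFriezeOn n Set.univ D f

/-- `f` is a frieze on the subpolygon with vertex set `W`: the Ptolemy relation holds
for all crossing diagonals of the subpolygon. -/
def IsFriezeOn (n : ℕ) {K : Type*} [Mul K] [Add K] (W : Set (ZMod n))
    (f : ZMod n → ZMod n → K) : Prop :=
  ∀ a b c d : ZMod n, a ∈ W → b ∈ W → c ∈ W → d ∈ W →
    Crosses n a b c d → PtolemyRel f a b c d

/-- `f` is a frieze on the `n`-gon. -/
def IsFrieze (n : ℕ) {K : Type*} [Mul K] [Add K] (f : ZMod n → ZMod n → K) : Prop :=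
  IsFriezeOn n Set.univ f

/-- The vertices of the `n`-gon realised as a regular convex `n`-gon in the Euclidean
plane. -/
noncomputable def vtx (n : ℕ) (a : ZMod n) : ℝ × ℝ :=
  (Real.cos (2 * Real.pi * (a.val : ℝ) / n), Real.sin (2 * Real.pi * (a.val : ℝ) / n))

/-- The point with parameter `t` on the segment from `A` to `B`. -/
def segPt (A B : ℝ × ℝ) (t : ℝ) : ℝ × ℝ :=
  ((1 - t) * A.1 + t * B.1, (1 - t) * A.2 + t * B.2)

/-- In the regular realisation of the `n`-gon, the diagonal `{c,d}` crosses the diagonal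
`{a,b}` at the interior point with parameter `t` along the segment from `a` to `b`. -/
def CrossesAt (n : ℕ) (a b c d : ZMod n) (t : ℝ) : Prop :=
  0 < t ∧ t < 1 ∧ ∃ s : ℝ, 0 < s ∧ s < 1 ∧
    segPt (vtx n a) (vtx n b) t = segPt (vtx n c) (vtx n d) s

/-- `l` is a T-path from `a` to `b` with respect to `D` in the subpolygon of the `n`-gon
with vertex set `W`.  Writing `p = l.length` and `π_i = l.getD (i-1) 0` (so the paper's
`π_1, …, π_p` are the entries of `l`), the conditions are: the path starts at `a` and
ends at `b`, uses vertices of `W`; (i) the consecutive pairs are pairwise different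
diagonals; (ii) no step crosses a diagonal in `D`; (iii) the steps starting at an
even position (in the paper's 1-based numbering) are diagonals in `D` which cross the
diagonal `{a,b}` at pairwise different points progressing monotonically in the
direction from `a` to `b`. -/
def IsTPathOn (n : ℕ) (W : Set (ZMod n)) (D : Set (Sym2 (ZMod n))) (a b : ZMod n)
    (l : List (ZMod n)) : Prop :=
  2 ≤ l.length ∧
  l.getD 0 0 = a ∧
  l.getD (l.length - 1) 0 = b ∧
  (∀ i, i < l.length → l.getD i 0 ∈ W) ∧
  (∀ i, i + 1 < l.length → l.getD i 0 ≠ l.getD (i + 1) 0) ∧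
  (∀ i j, i < j → j + 1 < l.length →
    s(l.getD i 0, l.getD (i + 1) 0) ≠ s(l.getD j 0, l.getD (j + 1) 0)) ∧
  (∀ i, i + 1 < l.length → ∀ c d, s(c, d) ∈ D →
    ¬ Crosses n (l.getD i 0) (l.getD (i + 1) 0) c d) ∧
  (∀ i, Odd i → i + 1 < l.length → s(l.getD i 0, l.getD (i + 1) 0) ∈ D) ∧
  (∃ t : ℕ → ℝ,
    (∀ i, Odd i → i + 1 < l.length → CrossesAt n a b (l.getD i 0) (l.getD (i + 1) 0) (t i)) ∧
    (∀ i j, Odd i → Odd j → i < j → j + 1 < l.length → t i < t j))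

/-- `l` is a T-path from `a` to `b` with respect to `D` in the `n`-gon. -/
def IsTPath (n : ℕ) (D : Set (Sym2 (ZMod n))) (a b : ZMod n) (l : List (ZMod n)) : Prop :=
  IsTPathOn n Set.univ D a b l

open Classical in
/-- The (finite) set of all T-paths from `a` to `b` with respect to `D` in the
subpolygon with vertex set `W`.  (Any T-path has pairwise different steps, hence has
length at most `n * n + 1`, so this finite set contains all of them.) -/
noncomputable def TPathFinsetOn (n : ℕ) [NeZero n] (W : Set (ZMod n))
    (D : Set (Sym2 (ZMod n))) (a b : ZMod n) : Finset (List (ZMod n)) :=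
  ((Finset.range (n * n + 2)).biUnion fun k =>
    (Finset.univ : Finset (Fin k → ZMod n)).image List.ofFn).filter (IsTPathOn n W D a b)

/-- The (finite) set of all T-paths from `a` to `b` with respect to `D` in the `n`-gon. -/
noncomputable def TPathFinset (n : ℕ) [NeZero n] (D : Set (Sym2 (ZMod n))) (a b : ZMod n) :
    Finset (List (ZMod n)) :=
  TPathFinsetOn n Set.univ D a b

/-- The weight `f(π)` of a T-path `l`: the product of the values of `f` on the steps at
odd positions (1-based) divided by the product of the values on the steps at even
positions. -/
def pathWeight (n : ℕ) {K : Type*} [CommGroup K] (f : ZMod n → ZMod n → K)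
    (l : List (ZMod n)) : K :=
  (∏ i ∈ (Finset.range (l.length - 1)).filter (fun i => Even i),
      f (l.getD i 0) (l.getD (i + 1) 0)) /
  (∏ i ∈ (Finset.range (l.length - 1)).filter (fun i => Odd i),
      f (l.getD i 0) (l.getD (i + 1) 0))

/-- `f` satisfies the T-path formula with respect to `D` on the subpolygon with vertex
set `W`: for all vertices `a ≠ b` of the subpolygon, `f a b` is the sum of the weights
of all T-paths from `a` to `b`.  Since the semifield `K` has no zero element, the sum is
computed in `WithZero K` (the sum is in fact always a sum of a nonempty collection). -/
def SatisfiesTPathFormulaOn (n : ℕ) [NeZero n] {K : Type*} [PaperSemifield K]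
    (W : Set (ZMod n)) (D : Set (Sym2 (ZMod n))) (f : ZMod n → ZMod n → K) : Prop :=
  ∀ a b : ZMod n, a ∈ W → b ∈ W → a ≠ b →
    WithZero.coe (f a b) = ∑ l ∈ TPathFinsetOn n W D a b, WithZero.coe (pathWeight n f l)

/-- `f` satisfies the T-path formula with respect to `D` on the `n`-gon. -/
def SatisfiesTPathFormula (n : ℕ) [NeZero n] {K : Type*} [PaperSemifield K]
    (D : Set (Sym2 (ZMod n))) (f : ZMod n → ZMod n → K) : Prop :=
  SatisfiesTPathFormulaOn n Set.univ D f

/-- `W` is the vertex set of one of the subpolygons into which the pairwise non-crossing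
internal diagonals `E` divide the `n`-gon: `W` has at least three vertices, consecutive
vertices of `W` are joined by an edge of the polygon or by a diagonal in `E`, and no
diagonal in `E` cuts through `W`. -/
def IsCell (n : ℕ) (E : Set (Sym2 (ZMod n))) (W : Set (ZMod n)) : Prop :=
  3 ≤ W.ncard ∧
  (∀ w w', NextIn n W w w' → (w' = w + 1 ∨ s(w, w') ∈ E)) ∧
  (∀ c d, s(c, d) ∈ E → c ∈ W → d ∈ W → (NextIn n W c d ∨ NextIn n W d c))

set_option linter.unusedSectionVars false
set_option maxHeartbeats 1000000

section Helpers
variable {n : ℕ} [NeZero n]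

lemma relPos_lt' (a x : ZMod n) : relPos n a x < n := ZMod.val_lt _

lemma relPos_eq_zero_iff' {a x : ZMod n} : relPos n a x = 0 ↔ x = a := by
  rw [relPos, ZMod.val_eq_zero, sub_eq_zero]

lemma relPos_pos' {a x : ZMod n} (h : x ≠ a) : 0 < relPos n a x :=
  Nat.pos_of_ne_zero (fun h0 => h (relPos_eq_zero_iff'.mp h0))

lemma relPos_inj' {a x y : ZMod n} (h : relPos n a x = relPos n a y) : x = y := by
  have : x - a = y - a := ZMod.val_injective _ h
  simpa [sub_left_injective.eq_iff] using this

lemma relPos_add' (a c x : ZMod n) :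
    relPos n a x = (relPos n a c + relPos n c x) % n := by
  have : x - a = (c - a) + (x - c) := by ring
  rw [relPos, this, ZMod.val_add]; rfl

lemma relPos_add_cases' (a c x : ZMod n) :
    relPos n a c + relPos n c x = relPos n a x ∨
    relPos n a c + relPos n c x = relPos n a x + n := by
  have h := relPos_add' a c x
  have h1 := relPos_lt' a c
  have h2 := relPos_lt' c x
  rcases Nat.lt_or_ge (relPos n a c + relPos n c x) n with hs | hs
  · left; rw [h, Nat.mod_eq_of_lt hs]
  · right; rw [h]
    have hlt : relPos n a c + relPos n c x - n < n := by omega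
    rw [Nat.mod_eq_sub_mod hs, Nat.mod_eq_of_lt hlt]; omega

lemma relPos_rev' {a b : ZMod n} (h : b ≠ a) : relPos n a b + relPos n b a = n := by
  have h1 := relPos_add_cases' a b a
  have h2 := relPos_pos' h
  have h3 := relPos_pos' (fun hh => h hh.symm)
  have h4 : relPos n a a = 0 := relPos_eq_zero_iff'.mpr rfl
  omega

/-- change of base: positions measured from `u` in terms of positions from a fixed
origin `o`. -/
lemma relPos_chg {o u x : ZMod n} (hu : u ≠ o) :
    (relPos n o u ≤ relPos n o x → relPos n u x = relPos n o x - relPos n o u) ∧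
    (relPos n o x < relPos n o u → relPos n u x = n + relPos n o x - relPos n o u) := by
  have h1 := relPos_add_cases' o u x
  have h2 := relPos_rev' hu
  have h3 := relPos_lt' o x
  have h4 := relPos_lt' u x
  have h5 := relPos_lt' o u
  have h6 := relPos_pos' hu
  constructor <;> intro <;> omega

/-- cross product / side function -/
def cr (A B C : ℝ × ℝ) : ℝ := (B.1 - A.1) * (C.2 - A.2) - (B.2 - A.2) * (C.1 - A.1)

lemma cr_third_left (A B : ℝ × ℝ) : cr A B A = 0 := by simp [cr]
lemma cr_third_right (A B : ℝ × ℝ) : cr A B B = 0 := by simp [cr]; ring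
lemma cr_swap23 (A B C : ℝ × ℝ) : cr A C B = - cr A B C := by simp [cr]; ring
lemma cr_segPt (A B C D : ℝ × ℝ) (t : ℝ) :
    cr A B (segPt C D t) = (1 - t) * cr A B C + t * cr A B D := by
  simp [cr, segPt]; ring

lemma relPos_int' (a b : ZMod n) :
    ∃ k : ℤ, (b.val : ℤ) - (a.val : ℤ) = (relPos n a b : ℤ) + n * k := by
  have h : (((b.val : ℤ) - (a.val : ℤ) - (relPos n a b : ℤ) : ℤ) : ZMod n) = 0 := by
    push_cast
    simp [relPos, ZMod.natCast_val, ZMod.cast_id]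
  rw [ZMod.intCast_zmod_eq_zero_iff_dvd] at h
  obtain ⟨k, hk⟩ := h
  exact ⟨k, by omega⟩

lemma sin_angle' (a b : ZMod n) :
    Real.sin (2*Real.pi*(b.val:ℝ)/n - 2*Real.pi*(a.val:ℝ)/n)
      = Real.sin (2*Real.pi*(relPos n a b : ℝ)/n) := by
  obtain ⟨k, hk⟩ := relPos_int' a b
  have hn0 : (n:ℝ) ≠ 0 := Nat.cast_ne_zero.mpr (NeZero.ne n)
  have hkr : (b.val:ℝ) - (a.val:ℝ) = (relPos n a b : ℝ) + n * k := by
    exact_mod_cast congrArg (fun z : ℤ => (z : ℝ)) hk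
  have e0 : 2*Real.pi*(b.val:ℝ)/n - 2*Real.pi*(a.val:ℝ)/n
      = 2*Real.pi*((b.val:ℝ) - (a.val:ℝ))/n := by ring
  have : 2*Real.pi*(b.val:ℝ)/n - 2*Real.pi*(a.val:ℝ)/n
      = 2*Real.pi*(relPos n a b : ℝ)/n + (k:ℝ) * (2 * Real.pi) := by
    rw [e0, hkr]; field_simp
  rw [this, Real.sin_add_int_mul_two_pi]

lemma sin_identity' (X Y : ℝ) :
    Real.sin X + Real.sin Y - Real.sin (X + Y)
      = 4 * Real.sin (X/2) * Real.sin (Y/2) * Real.sin ((X+Y)/2) := by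
  have hXY : X + Y = X/2 + Y/2 + (X/2 + Y/2) := by ring
  rw [hXY]
  nth_rewrite 1 [show X = X/2 + X/2 by ring]
  nth_rewrite 1 [show Y = Y/2 + Y/2 by ring]
  rw [show (X/2 + Y/2 + (X/2 + Y/2))/2 = X/2 + Y/2 by ring]
  rw [Real.sin_add, Real.sin_add, Real.sin_add (X/2+Y/2), Real.sin_add, Real.cos_add]
  linear_combination (-2*Real.sin (X/2)*Real.cos (X/2)) * Real.sin_sq_add_cos_sq (Y/2)
    + (-2*Real.sin (Y/2)*Real.cos (Y/2)) * Real.sin_sq_add_cos_sq (X/2)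

lemma cr_vtx (a b c : ZMod n) :
    cr (vtx n a) (vtx n b) (vtx n c)
      = 4 * Real.sin (Real.pi * (relPos n a b : ℝ)/n)
          * Real.sin (Real.pi * ((relPos n a c : ℝ) - (relPos n a b : ℝ))/n)
          * Real.sin (Real.pi * (relPos n a c : ℝ)/n) := by
  have hn0 : (n:ℝ) ≠ 0 := Nat.cast_ne_zero.mpr (NeZero.ne n)
  set A := 2*Real.pi*(a.val:ℝ)/n with hA
  set B := 2*Real.pi*(b.val:ℝ)/n with hB
  set C := 2*Real.pi*(c.val:ℝ)/n with hC
  have e1 : cr (vtx n a) (vtx n b) (vtx n c)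
      = Real.sin (B - A) + Real.sin (C - B) + Real.sin (A - C) := by
    simp only [cr, vtx, ← hA, ← hB, ← hC, Real.sin_sub]
    ring
  have e2 : Real.sin (B - A) = Real.sin (2*Real.pi*(relPos n a b : ℝ)/n) := sin_angle' a b
  have e4 : Real.sin (A - C) = - Real.sin (2*Real.pi*(relPos n a c : ℝ)/n) := by
    rw [show A - C = -(C - A) by ring, Real.sin_neg, sin_angle' a c]
  have e3 : Real.sin (C - B)
      = Real.sin (2*Real.pi*((relPos n a c : ℝ) - (relPos n a b : ℝ))/n) := by
    rw [sin_angle' b c]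
    rcases relPos_add_cases' a b c with h | h
    · congr 1
      have : (relPos n b c : ℝ) = (relPos n a c : ℝ) - (relPos n a b : ℝ) := by
        have := congrArg (fun m : ℕ => (m : ℝ)) h; push_cast at this; linarith
      rw [this]
    · have hr : (relPos n b c : ℝ) = (relPos n a c : ℝ) - (relPos n a b : ℝ) + n := by
        have := congrArg (fun m : ℕ => (m : ℝ)) h; push_cast at this; linarith
      rw [hr, show 2*Real.pi*((relPos n a c : ℝ) - (relPos n a b : ℝ) + n)/n
          = 2*Real.pi*((relPos n a c : ℝ) - (relPos n a b : ℝ))/n + ((1:ℤ):ℝ) * (2*Real.pi) by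
            field_simp; ring]
      rw [Real.sin_add_int_mul_two_pi]
  rw [e1, e2, e3, e4]
  have hid := sin_identity' (2*Real.pi*(relPos n a b : ℝ)/n)
      (2*Real.pi*((relPos n a c : ℝ) - (relPos n a b : ℝ))/n)
  rw [show 2*Real.pi*(relPos n a b : ℝ)/n + 2*Real.pi*((relPos n a c : ℝ) - (relPos n a b : ℝ))/n
      = 2*Real.pi*(relPos n a c : ℝ)/n by field_simp; ring] at hid
  rw [show Real.sin (2*Real.pi*(relPos n a b:ℝ)/n)
        + Real.sin (2*Real.pi*((relPos n a c:ℝ) - (relPos n a b:ℝ))/n)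
        + -Real.sin (2*Real.pi*(relPos n a c:ℝ)/n)
      = Real.sin (2*Real.pi*(relPos n a b:ℝ)/n)
        + Real.sin (2*Real.pi*((relPos n a c:ℝ) - (relPos n a b:ℝ))/n)
        - Real.sin (2*Real.pi*(relPos n a c:ℝ)/n) by ring, hid]
  have d1 : 2*Real.pi*(relPos n a b : ℝ)/n/2 = Real.pi*(relPos n a b : ℝ)/n := by ring
  have d2 : 2*Real.pi*((relPos n a c : ℝ) - (relPos n a b : ℝ))/n/2
      = Real.pi*((relPos n a c : ℝ) - (relPos n a b : ℝ))/n := by ring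
  have d3 : 2*Real.pi*(relPos n a c : ℝ)/n/2 = Real.pi*(relPos n a c : ℝ)/n := by ring
  rw [d1, d2, d3]

lemma cr_pos_of {a b c : ZMod n} (h1 : 0 < relPos n a b) (h2 : relPos n a b < relPos n a c) :
    0 < cr (vtx n a) (vtx n b) (vtx n c) := by
  rw [cr_vtx]
  have hn : (0:ℝ) < n := by exact_mod_cast (NeZero.pos n)
  have hc := relPos_lt' a c
  have s1 : 0 < Real.sin (Real.pi * (relPos n a b : ℝ)/n) := by
    apply Real.sin_pos_of_pos_of_lt_pi
    · positivity
    · rw [div_lt_iff₀ hn]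
      nlinarith [Real.pi_pos, (show (relPos n a b : ℝ) < n by exact_mod_cast h2.trans hc)]
  have s2 : 0 < Real.sin (Real.pi * ((relPos n a c : ℝ) - (relPos n a b : ℝ))/n) := by
    apply Real.sin_pos_of_pos_of_lt_pi
    · apply div_pos _ hn
      apply mul_pos Real.pi_pos
      have : (relPos n a b : ℝ) < (relPos n a c : ℝ) := by exact_mod_cast h2
      linarith
    · have h3 : (relPos n a c : ℝ) - (relPos n a b : ℝ) < n := by
        have h4 : (relPos n a c : ℝ) < n := by exact_mod_cast hc
        have h5 : (0:ℝ) ≤ (relPos n a b : ℝ) := by positivity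
        linarith
      rw [div_lt_iff₀ hn]
      nlinarith [Real.pi_pos]
  have s3 : 0 < Real.sin (Real.pi * (relPos n a c : ℝ)/n) := by
    apply Real.sin_pos_of_pos_of_lt_pi
    · have : (0:ℝ) < (relPos n a c : ℝ) := by exact_mod_cast h1.trans h2
      positivity
    · rw [div_lt_iff₀ hn]
      nlinarith [Real.pi_pos, (show (relPos n a c : ℝ) < n by exact_mod_cast hc)]
  positivity

lemma cr_neg_of {a b c : ZMod n} (h1 : 0 < relPos n a c) (h2 : relPos n a c < relPos n a b) :
    cr (vtx n a) (vtx n b) (vtx n c) < 0 := by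
  have := cr_pos_of h1 h2
  rw [cr_swap23] at this; linarith

lemma relPos_lt_of_cr_pos {a b c : ZMod n} (hc : c ≠ a) (hcb : c ≠ b)
    (h : 0 < cr (vtx n a) (vtx n b) (vtx n c)) : relPos n a b < relPos n a c := by
  rcases Nat.lt_trichotomy (relPos n a b) (relPos n a c) with h1 | h1 | h1
  · exact h1
  · exact absurd (relPos_inj' h1.symm) hcb
  · have := cr_neg_of (relPos_pos' hc) h1; linarith

lemma relPos_lt_of_cr_neg {a b c : ZMod n} (hb : b ≠ a) (hcb : c ≠ b)
    (h : cr (vtx n a) (vtx n b) (vtx n c) < 0) : relPos n a c < relPos n a b := by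
  rcases Nat.lt_trichotomy (relPos n a b) (relPos n a c) with h1 | h1 | h1
  · have := cr_pos_of (relPos_pos' hb) h1; linarith
  · exact absurd (relPos_inj' h1.symm) hcb
  · exact h1

lemma cr_eq_zero_vtx {a b c : ZMod n} (hb : b ≠ a) (hc : c ≠ a) (hcb : c ≠ b)
    (h : cr (vtx n a) (vtx n b) (vtx n c) = 0) : False := by
  rcases Nat.lt_trichotomy (relPos n a b) (relPos n a c) with h1 | h1 | h1
  · have := cr_pos_of (relPos_pos' hb) h1; linarith
  · exact absurd (relPos_inj' h1.symm) hcb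
  · have := cr_neg_of (relPos_pos' hc) h1; linarith

lemma crossesAt_extract {a b c d : ZMod n} {t : ℝ} (h : CrossesAt n a b c d t) :
    ∃ s, 0 < s ∧ s < 1 ∧
      (1-s) * cr (vtx n a) (vtx n b) (vtx n c) + s * cr (vtx n a) (vtx n b) (vtx n d) = 0 ∧
      (1-t) * cr (vtx n c) (vtx n d) (vtx n a) + t * cr (vtx n c) (vtx n d) (vtx n b) = 0 ∧
      0 < t ∧ t < 1 := by
  obtain ⟨ht0, ht1, s, hs0, hs1, heq⟩ := h
  refine ⟨s, hs0, hs1, ?_, ?_, ht0, ht1⟩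
  · have h1 : cr (vtx n a) (vtx n b) (segPt (vtx n a) (vtx n b) t) = 0 := by
      rw [cr_segPt, cr_third_left, cr_third_right]; ring
    rw [heq, cr_segPt] at h1; linarith
  · have h2 : cr (vtx n c) (vtx n d) (segPt (vtx n c) (vtx n d) s) = 0 := by
      rw [cr_segPt, cr_third_left, cr_third_right]; ring
    rw [← heq, cr_segPt] at h2; linarith

lemma crossesAt_swap_cd {a b c d : ZMod n} {t : ℝ} (h : CrossesAt n a b c d t) :
    CrossesAt n a b d c t := by
  obtain ⟨ht0, ht1, s, hs0, hs1, heq⟩ := h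
  refine ⟨ht0, ht1, 1 - s, by linarith, by linarith, ?_⟩
  rw [heq]
  simp [segPt]
  constructor <;> ring

lemma crosses_of_crossesAt {a b c d : ZMod n} {t : ℝ}
    (hba : b ≠ a) (hca : c ≠ a) (hcb : c ≠ b) (hda : d ≠ a) (hdb : d ≠ b)
    (h : CrossesAt n a b c d t) : Crosses n a b c d := by
  obtain ⟨s, hs0, hs1, E1, _, _, _⟩ := crossesAt_extract h
  rcases Nat.lt_trichotomy (relPos n a b) (relPos n a c) with h1 | h1 | h1
  · -- cr a b c > 0, so cr a b d < 0, so r a d < r a b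
    have hX : 0 < cr (vtx n a) (vtx n b) (vtx n c) := cr_pos_of (relPos_pos' hba) h1
    have hY : cr (vtx n a) (vtx n b) (vtx n d) < 0 := by nlinarith
    have h2 := relPos_lt_of_cr_neg hba hdb hY
    exact Or.inr ⟨relPos_pos' hda, h2, h1⟩
  · exact absurd (relPos_inj' h1.symm) hcb
  · have hX : cr (vtx n a) (vtx n b) (vtx n c) < 0 := cr_neg_of (relPos_pos' hca) h1
    have hY : 0 < cr (vtx n a) (vtx n b) (vtx n d) := by nlinarith
    have h2 := relPos_lt_of_cr_pos hda hdb hY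
    exact Or.inl ⟨relPos_pos' hca, h1, h2⟩

lemma crossesAt_of_cyclic {a b c d : ZMod n} (h : CyclicallyOrdered n a c b d) :
    ∃ t, CrossesAt n a b c d t := by
  obtain ⟨h1, h2, h3⟩ := h
  have hca : c ≠ a := fun hh => by rw [hh] at h1; simp [relPos_eq_zero_iff'.mpr rfl] at h1
  have hban := relPos_lt' a b
  have hcan := relPos_lt' a c
  have hdan := relPos_lt' a d
  have hcb : relPos n c b = relPos n a b - relPos n a c := by
    have := relPos_add_cases' a c b
    have := relPos_lt' c b
    omega
  have hcd : relPos n c d = relPos n a d - relPos n a c := by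
    have := relPos_add_cases' a c d
    have := relPos_lt' c d
    omega
  have hcaa : relPos n c a = n - relPos n a c := by
    have := relPos_rev' hca
    omega
  have X1 : cr (vtx n a) (vtx n b) (vtx n c) < 0 := cr_neg_of h1 h2
  have X2 : 0 < cr (vtx n a) (vtx n b) (vtx n d) := cr_pos_of (by omega) h3
  have Y1 : 0 < cr (vtx n c) (vtx n d) (vtx n a) := cr_pos_of (by omega) (by omega)
  have Y2 : cr (vtx n c) (vtx n d) (vtx n b) < 0 := cr_neg_of (by omega) (by omega)
  set A := vtx n a; set B := vtx n b; set C := vtx n c; set D := vtx n d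
  have hΔ : cr C D A - cr C D B = cr A B D - cr A B C := by simp [cr]; ring
  have cram1 : cr C D A * B.1 - cr C D B * A.1 = cr A B D * C.1 - cr A B C * D.1 := by
    simp [cr]; ring
  have cram2 : cr C D A * B.2 - cr C D B * A.2 = cr A B D * C.2 - cr A B C * D.2 := by
    simp [cr]; ring
  set Δ := cr C D A - cr C D B with hΔdef
  have hΔpos : 0 < Δ := by simp only [hΔdef]; linarith
  refine ⟨cr C D A / Δ, div_pos Y1 hΔpos, ?_, (- cr A B C) / Δ, ?_, ?_, ?_⟩
  · rw [div_lt_one hΔpos]; simp only [hΔdef]; linarith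
  · apply div_pos (by linarith) hΔpos
  · rw [div_lt_one hΔpos]; linarith
  · have hΔne : Δ ≠ 0 := ne_of_gt hΔpos
    have h1 : (1 - cr C D A / Δ) = (- cr C D B) / Δ := by
      rw [one_sub_div hΔne]; congr 1; simp only [hΔdef]; ring
    have h2 : (1 - (- cr A B C) / Δ) = (cr A B D) / Δ := by
      rw [one_sub_div hΔne]; congr 1; rw [hΔ]; ring
    rw [Prod.ext_iff]
    constructor
    · show (1 - cr C D A / Δ) * A.1 + (cr C D A / Δ) * B.1
        = (1 - (- cr A B C) / Δ) * C.1 + ((- cr A B C) / Δ) * D.1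
      rw [h1, h2, div_mul_eq_mul_div, div_mul_eq_mul_div, div_mul_eq_mul_div,
          div_mul_eq_mul_div, ← add_div, ← add_div]
      congr 1
      linear_combination cram1
    · show (1 - cr C D A / Δ) * A.2 + (cr C D A / Δ) * B.2
        = (1 - (- cr A B C) / Δ) * C.2 + ((- cr A B C) / Δ) * D.2
      rw [h1, h2, div_mul_eq_mul_div, div_mul_eq_mul_div, div_mul_eq_mul_div,
          div_mul_eq_mul_div, ← add_div, ← add_div]
      congr 1
      linear_combination cram2

lemma transfer_lt {C D C' D' P Q B : ℝ × ℝ} {t t' s s' u w v v' : ℝ}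
    (hP : 0 < cr C' D' P) (hQ : 0 < cr C' D' Q) (hB : cr C' D' B < 0)
    (hsame : (0 ≤ cr C' D' C ∧ 0 ≤ cr C' D' D) ∨ (cr C' D' C ≤ 0 ∧ cr C' D' D ≤ 0))
    (htt' : t < t')
    (hX : segPt P B t = segPt C D u) (hu : 0 < u) (hu1 : u < 1)
    (hX' : segPt P B t' = segPt C' D' v)
    (hY : segPt Q B s = segPt C D w) (hw : 0 < w) (hw1 : w < 1)
    (hY' : segPt Q B s' = segPt C' D' v') :
    s < s' := by
  have h0 : cr C' D' (segPt C' D' v) = 0 := by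
    rw [cr_segPt, cr_third_left, cr_third_right]; ring
  have h0' : cr C' D' (segPt C' D' v') = 0 := by
    rw [cr_segPt, cr_third_left, cr_third_right]; ring
  have e1 : (1 - t') * cr C' D' P + t' * cr C' D' B = 0 := by
    rw [← cr_segPt, hX', h0]
  have e2 : (1 - s') * cr C' D' Q + s' * cr C' D' B = 0 := by
    rw [← cr_segPt, hY', h0']
  have e3 : (1 - t) * cr C' D' P + t * cr C' D' B
      = (1 - u) * cr C' D' C + u * cr C' D' D := by
    rw [← cr_segPt, ← cr_segPt, hX]
  have e4 : (1 - s) * cr C' D' Q + s * cr C' D' B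
      = (1 - w) * cr C' D' C + w * cr C' D' D := by
    rw [← cr_segPt, ← cr_segPt, hY]
  have hXpos : 0 < (1 - u) * cr C' D' C + u * cr C' D' D := by nlinarith
  have hYpos : 0 < (1 - w) * cr C' D' C + w * cr C' D' D := by
    rcases hsame with ⟨h1, h2⟩ | ⟨h1, h2⟩
    · rcases lt_or_ge 0 (cr C' D' C) with h3 | h3
      · nlinarith
      · have hC0 : cr C' D' C = 0 := le_antisymm h3 h1
        rw [hC0] at hXpos ⊢
        have : 0 < cr C' D' D := by nlinarith
        nlinarith
    · nlinarith
  nlinarith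

lemma no_late {C D C' D' P B : ℝ × ℝ} {t t' u v : ℝ}
    (hP : cr C' D' P < 0) (hB : 0 < cr C' D' B)
    (hsame : cr C' D' C ≤ 0 ∧ cr C' D' D ≤ 0)
    (htt' : t' < t)
    (hX' : segPt P B t' = segPt C' D' v)
    (hX : segPt P B t = segPt C D u) (hu : 0 < u) (hu1 : u < 1) : False := by
  have h0 : cr C' D' (segPt C' D' v) = 0 := by
    rw [cr_segPt, cr_third_left, cr_third_right]; ring
  have e1 : (1 - t') * cr C' D' P + t' * cr C' D' B = 0 := by
    rw [← cr_segPt, hX', h0]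
  have e3 : (1 - t) * cr C' D' P + t * cr C' D' B
      = (1 - u) * cr C' D' C + u * cr C' D' D := by
    rw [← cr_segPt, ← cr_segPt, hX]
  nlinarith [hsame.1, hsame.2]

end Helpers

section Mid
variable {n : ℕ} [NeZero n]

lemma relPos_self' (a : ZMod n) : relPos n a a = 0 := by
  simp [relPos]

/-- Classification of a D-step in the ear setting: `x` lies strictly between `η` and
`β`, and `y` lies strictly between `β` and `ζ` (possibly equal to `ζ`). -/
def EarCls (n : ℕ) (η β ζ x y : ZMod n) : Prop :=
  0 < relPos n η x ∧ relPos n η x < relPos n η β ∧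
  relPos n η β < relPos n η y ∧ relPos n η y ≤ relPos n η ζ

lemma ear_core_transfer {η β ζ p q x y x' y' : ZMod n} {t t' s s' : ℝ}
    (hB2 : relPos n η β < relPos n η ζ)
    (hp : p = η ∨ (relPos n η ζ < relPos n η p ∧ relPos n η p < n))
    (hq : q = η ∨ (relPos n η ζ < relPos n η q ∧ relPos n η q < n))
    (hxy : EarCls n η β ζ x y) (hxy' : EarCls n η β ζ x' y')
    (hnc1 : ¬ Crosses n x' y' x y) (hnc2 : ¬ Crosses n x' y' y x)
    (h1 : CrossesAt n p β x y t) (h2 : CrossesAt n p β x' y' t') (htt' : t < t')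
    (h3 : CrossesAt n q β x y s) (h4 : CrossesAt n q β x' y' s') : s < s' := by
  obtain ⟨hx1, hx2, hy1, hy2⟩ := hxy
  obtain ⟨hx1', hx2', hy1', hy2'⟩ := hxy'
  have hZ := relPos_lt' (n := n) η ζ
  have hx'η : x' ≠ η := by
    intro h; rw [h, relPos_self'] at hx1'; omega
  have hcy' : relPos n x' y' = relPos n η y' - relPos n η x' :=
    (relPos_chg hx'η).1 (by omega)
  have hcβ : relPos n x' β = relPos n η β - relPos n η x' :=
    (relPos_chg hx'η).1 (by omega)
  have hsP : 0 < cr (vtx n x') (vtx n y') (vtx n p) := by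
    rcases hp with hpe | ⟨hp1, hp2⟩
    · rw [hpe]
      have hcp : relPos n x' η = n - relPos n η x' := by
        have := relPos_rev' hx'η; omega
      exact cr_pos_of (by omega) (by omega)
    · have hcp : relPos n x' p = relPos n η p - relPos n η x' :=
        (relPos_chg hx'η).1 (by omega)
      exact cr_pos_of (by omega) (by omega)
  have hsQ : 0 < cr (vtx n x') (vtx n y') (vtx n q) := by
    rcases hq with hqe | ⟨hq1, hq2⟩
    · rw [hqe]
      have hcq : relPos n x' η = n - relPos n η x' := by
        have := relPos_rev' hx'η; omega
      exact cr_pos_of (by omega) (by omega)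
    · have hcq : relPos n x' q = relPos n η q - relPos n η x' :=
        (relPos_chg hx'η).1 (by omega)
      exact cr_pos_of (by omega) (by omega)
  have hsB : cr (vtx n x') (vtx n y') (vtx n β) < 0 := cr_neg_of (by omega) (by omega)
  have hsame : (0 ≤ cr (vtx n x') (vtx n y') (vtx n x) ∧
        0 ≤ cr (vtx n x') (vtx n y') (vtx n y)) ∨
      (cr (vtx n x') (vtx n y') (vtx n x) ≤ 0 ∧
        cr (vtx n x') (vtx n y') (vtx n y) ≤ 0) := by
    have hXpos : relPos n η x < relPos n η x' → 0 < cr (vtx n x') (vtx n y') (vtx n x) := by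
      intro h
      have hcx : relPos n x' x = n + relPos n η x - relPos n η x' := (relPos_chg hx'η).2 h
      exact cr_pos_of (by omega) (by omega)
    have hXneg : relPos n η x' < relPos n η x → cr (vtx n x') (vtx n y') (vtx n x) < 0 := by
      intro h
      have hcx : relPos n x' x = relPos n η x - relPos n η x' :=
        (relPos_chg hx'η).1 (by omega)
      exact cr_neg_of (by omega) (by omega)
    have hYpos : relPos n η y' < relPos n η y → 0 < cr (vtx n x') (vtx n y') (vtx n y) := by
      intro h
      have hcy : relPos n x' y = relPos n η y - relPos n η x' :=
        (relPos_chg hx'η).1 (by omega)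
      exact cr_pos_of (by omega) (by omega)
    have hYneg : relPos n η y < relPos n η y' → cr (vtx n x') (vtx n y') (vtx n y) < 0 := by
      intro h
      have hcy : relPos n x' y = relPos n η y - relPos n η x' :=
        (relPos_chg hx'η).1 (by omega)
      exact cr_neg_of (by omega) (by omega)
    rcases Nat.lt_trichotomy (relPos n η x) (relPos n η x') with hxx | hxx | hxx
    · rcases Nat.lt_trichotomy (relPos n η y) (relPos n η y') with hyy | hyy | hyy
      · exfalso
        apply hnc2
        have hcy : relPos n x' y = relPos n η y - relPos n η x' :=
          (relPos_chg hx'η).1 (by omega)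
        have hcx : relPos n x' x = n + relPos n η x - relPos n η x' :=
          (relPos_chg hx'η).2 (by omega)
        exact Or.inl ⟨by omega, by omega, by omega⟩
      · have hyeq : y = y' := relPos_inj' hyy
        left
        exact ⟨(hXpos hxx).le, by rw [hyeq]; exact (cr_third_right _ _).ge⟩
      · exact Or.inl ⟨(hXpos hxx).le, (hYpos hyy).le⟩
    · have hxeq : x = x' := relPos_inj' hxx
      rcases Nat.lt_trichotomy (relPos n η y) (relPos n η y') with hyy | hyy | hyy
      · exact Or.inr ⟨by rw [hxeq]; exact (cr_third_left _ _).le, (hYneg hyy).le⟩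
      · left
        exact ⟨by rw [hxeq]; exact (cr_third_left _ _).ge,
          by rw [relPos_inj' hyy]; exact (cr_third_right _ _).ge⟩
      · exact Or.inl ⟨by rw [hxeq]; exact (cr_third_left _ _).ge, (hYpos hyy).le⟩
    · rcases Nat.lt_trichotomy (relPos n η y) (relPos n η y') with hyy | hyy | hyy
      · exact Or.inr ⟨(hXneg hxx).le, (hYneg hyy).le⟩
      · exact Or.inr ⟨(hXneg hxx).le, by rw [relPos_inj' hyy]; exact (cr_third_right _ _).le⟩
      · exfalso
        apply hnc1
        have hcx : relPos n x' x = relPos n η x - relPos n η x' :=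
          (relPos_chg hx'η).1 (by omega)
        have hcy : relPos n x' y = relPos n η y - relPos n η x' :=
          (relPos_chg hx'η).1 (by omega)
        exact Or.inl ⟨by omega, by omega, by omega⟩
  obtain ⟨_, _, u, hu0, hu1, hXeq⟩ := h1
  obtain ⟨_, _, v, hv0, hv1, hX'eq⟩ := h2
  obtain ⟨_, _, w, hw0, hw1, hYeq⟩ := h3
  obtain ⟨_, _, v', hv0', hv1', hY'eq⟩ := h4
  exact transfer_lt hsP hsQ hsB hsame htt' hXeq hu0 hu1 hX'eq hYeq hw0 hw1 hY'eq

lemma ear_exists {η β ζ q x y : ZMod n}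
    (hB1 : 0 < relPos n η β) (hB2 : relPos n η β < relPos n η ζ)
    (hq : q = η ∨ (relPos n η ζ < relPos n η q ∧ relPos n η q < n))
    (hxy : EarCls n η β ζ x y ∨ EarCls n η β ζ y x) :
    ∃ t, CrossesAt n q β x y t := by
  have hZ := relPos_lt' (n := n) η ζ
  rcases hxy with ⟨h1, h2, h3, h4⟩ | ⟨h1, h2, h3, h4⟩
  · rcases hq with rfl | ⟨hq1, hq2⟩
    · exact crossesAt_of_cyclic ⟨h1, h2, h3⟩
    · have hqη : q ≠ η := by intro h; rw [h, relPos_self'] at hq1; omega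
      have c1 := (relPos_chg (x := x) hqη).2 (by omega)
      have c2 := (relPos_chg (x := β) hqη).2 (by omega)
      have c3 := (relPos_chg (x := y) hqη).2 (by omega)
      exact crossesAt_of_cyclic ⟨by omega, by omega, by omega⟩
  · have hex : ∃ t, CrossesAt n q β y x t := by
      rcases hq with rfl | ⟨hq1, hq2⟩
      · exact crossesAt_of_cyclic ⟨h1, h2, h3⟩
      · have hqη : q ≠ η := by intro h; rw [h, relPos_self'] at hq1; omega
        have c1 := (relPos_chg (x := y) hqη).2 (by omega)
        have c2 := (relPos_chg (x := β) hqη).2 (by omega)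
        have c3 := (relPos_chg (x := x) hqη).2 (by omega)
        exact crossesAt_of_cyclic ⟨by omega, by omega, by omega⟩
    obtain ⟨t, ht⟩ := hex
    exact ⟨t, crossesAt_swap_cd ht⟩

lemma cons_tail_getD {X : Type*} (z d : X) (l : List X) (hl : l ≠ []) (k : ℕ) :
    (z :: l.tail).getD (k + 1) d = l.getD (k + 1) d := by
  cases l with
  | nil => exact absurd rfl hl
  | cons a l' => rfl

lemma cons_tail_length {X : Type*} (z : X) (l : List X) (hl : l ≠ []) :
    (z :: l.tail).length = l.length := by
  cases l with
  | nil => exact absurd rfl hl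
  | cons a l' => simp

lemma group_calc {K : Type*} [CommGroup K] (a b N P : K) :
    a / b * (b * N / P) = a * N / P := by
  rw [div_mul_div_comm, show a * (b * N) = b * (a * N) by
    rw [← mul_assoc, mul_comm a b, mul_assoc], mul_div_mul_left_eq_div]

end Mid
theorem ear_bijection_R
    (n : ℕ) (hn : 3 ≤ n) {K : Type*} [PaperSemifield K]
    (ζ η : ZMod n) (hζη : IsInternalDiag n ζ η)
    (D D₂ : Set (Sym2 (ZMod n)))
    (hD : IsDissection n D)
    (hsplit : D = insert s(ζ, η) D₂) (hdm : s(ζ, η) ∉ D₂)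
    (hD₂ : IsDissectionOf n {ε : ZMod n | relPos n η ε ≤ relPos n η ζ} D₂)
    (α β : ZMod n)
    (hα : 0 < relPos n ζ α ∧ relPos n ζ α < relPos n ζ η)
    (hβ : 0 < relPos n η β ∧ relPos n η β < relPos n η ζ)
    (f : ZMod n → ZMod n → K) (hf : SymmOn n Set.univ f) :
    Set.BijOn (fun l : List (ZMod n) => η :: l.tail)
      {l : List (ZMod n) | IsTPath n D α β l ∧ l.getD 1 0 = ζ ∧ l.getD 2 0 ≠ η}
      {l : List (ZMod n) | IsTPath n D η β l ∧ l.getD 1 0 = ζ} ∧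
    ∀ l : List (ZMod n), IsTPath n D α β l → l.getD 1 0 = ζ → l.getD 2 0 ≠ η →
      f α ζ / f η ζ * pathWeight n f (η :: l.tail) = pathWeight n f l := by
  haveI : NeZero n := ⟨by omega⟩
  obtain ⟨hζηne, -⟩ := hζη
  have hZpos : 0 < relPos n η ζ := relPos_pos' hζηne
  have hZlt : relPos n η ζ < n := relPos_lt' η ζ
  have hArange : relPos n η ζ < relPos n η α ∧ relPos n η α < n := by
    have h1 := relPos_add_cases' η ζ α
    have h2 := relPos_rev' hζηne
    have h3 := relPos_lt' η α
    have h4 := hα.1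
    have h5 := hα.2
    omega
  have hαη : α ≠ η := by
    intro h; have := congrArg (relPos n η) h; rw [relPos_self'] at this; omega
  have hβη : β ≠ η := by
    intro h; have := congrArg (relPos n η) h; rw [relPos_self'] at this; omega
  have hβζ : β ≠ ζ := by
    intro h; have := congrArg (relPos n η) h; omega
  have hαζ : α ≠ ζ := by
    intro h; have := congrArg (relPos n η) h; omega
  have hζηD : s(ζ, η) ∈ D := by rw [hsplit]; exact Set.mem_insert _ _
  have hD2sub : D₂ ⊆ D := by rw [hsplit]; exact Set.subset_insert _ _
  have hDmem : ∀ x y : ZMod n, s(x, y) ∈ D →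
      (x = ζ ∧ y = η) ∨ (x = η ∧ y = ζ) ∨ s(x, y) ∈ D₂ := by
    intro x y h
    rw [hsplit, Set.mem_insert_iff] at h
    rcases h with h | h
    · rw [Sym2.eq_iff] at h; tauto
    · exact Or.inr (Or.inr h)
  have hV2 : ∀ x y : ZMod n, s(x, y) ∈ D₂ →
      relPos n η x ≤ relPos n η ζ ∧ relPos n η y ≤ relPos n η ζ ∧ x ≠ y := by
    intro x y h
    obtain ⟨h1, h2, h3, -, -⟩ := hD₂.1 x y h
    exact ⟨h1, h2, h3⟩
  have hnoc : ∀ x y u v : ZMod n, s(x, y) ∈ D → s(u, v) ∈ D → ¬ Crosses n x y u v :=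
    hD.2
  -- ===================== classification of D-steps =====================
  have classify : ∀ (p : ZMod n) (l : List (ZMod n)),
      IsTPath n D p β l → l.getD 1 0 = ζ →
      (p = η ∨ (relPos n η ζ < relPos n η p ∧ relPos n η p < n ∧ l.getD 2 0 ≠ η)) →
      3 ≤ l.length ∧
      (∀ i, Odd i → i + 1 < l.length →
        EarCls n η β ζ (l.getD i 0) (l.getD (i+1) 0) ∨
        EarCls n η β ζ (l.getD (i+1) 0) (l.getD i 0)) := by
    intro p l hTP h1 hp
    obtain ⟨hlen, hget0, hlast, hWm, hadj, hpair, hncr, hDst, T, hT1, hT2⟩ := hTP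
    have hrp : relPos n η p = 0 ∨ (relPos n η ζ < relPos n η p ∧ relPos n η p < n) := by
      rcases hp with h | ⟨h1', h2', -⟩
      · left; rw [h]; exact relPos_self' η
      · exact Or.inr ⟨h1', h2'⟩
    have hβp : β ≠ p := by
      intro h; have := congrArg (relPos n η) h; omega
    have hζp : ζ ≠ p := by
      intro h; have := congrArg (relPos n η) h; omega
    have hlen3 : 3 ≤ l.length := by
      by_contra hcon
      have h2 : l.length - 1 = 1 := by omega
      rw [h2, h1] at hlast
      have := congrArg (relPos n η) hlast
      omega
    have hst1D : s(ζ, l.getD 2 0) ∈ D := by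
      have := hDst 1 odd_one (by omega)
      rwa [h1] at this
    have hl2η : l.getD 2 0 ≠ η := by
      rcases hp with hpe | ⟨-, -, h⟩
      · intro h2
        have hp01 := hpair 0 1 (by omega) (by omega)
        rw [hget0, h1, h2, hpe] at hp01
        exact hp01 Sym2.eq_swap
      · exact h
    have hst1D2 : s(ζ, l.getD 2 0) ∈ D₂ := by
      rcases hDmem _ _ hst1D with ⟨-, h2⟩ | ⟨h2, -⟩ | h2
      · exact absurd h2 hl2η
      · exact absurd h2 hζηne
      · exact h2
    have hc1V : relPos n η (l.getD 2 0) ≤ relPos n η ζ := (hV2 _ _ hst1D2).2.1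
    have hc1ζ : l.getD 2 0 ≠ ζ := fun h => (hV2 _ _ hst1D2).2.2 h.symm
    have hc10 : relPos n η (l.getD 2 0) ≠ 0 := fun h => hl2η (relPos_eq_zero_iff'.mp h)
    have hc1Z : relPos n η (l.getD 2 0) ≠ relPos n η ζ := fun h => hc1ζ (relPos_inj' h)
    have hcr1 : CrossesAt n p β ζ (l.getD 2 0) (T 1) := by
      have h' := hT1 1 odd_one (by omega)
      rwa [h1] at h'
    have hc1β : l.getD 2 0 ≠ β := by
      intro hbb
      obtain ⟨s0, hs00, hs01, E1, -, -, -⟩ := crossesAt_extract hcr1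
      rw [hbb, cr_third_right] at E1
      have hXz : (1 - s0) * cr (vtx n p) (vtx n β) (vtx n ζ) = 0 := by linarith
      rcases mul_eq_zero.mp hXz with h | h
      · linarith
      · exact cr_eq_zero_vtx hβp hζp (fun hh => hβζ hh.symm) h
    have hc1p : l.getD 2 0 ≠ p := by
      intro h; have := congrArg (relPos n η) h; omega
    have hcross1 : Crosses n p β ζ (l.getD 2 0) :=
      crosses_of_crossesAt hβp hζp (fun h => hβζ h.symm) hc1p hc1β hcr1
    have hrc1B : relPos n η (l.getD 2 0) < relPos n η β := by
      have ep1 := relPos_add_cases' η p ζ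
      have ep2 := relPos_add_cases' η p β
      have ep3 := relPos_add_cases' η p (l.getD 2 0)
      have lp1 := relPos_lt' p ζ
      have lp2 := relPos_lt' p β
      have lp3 := relPos_lt' p (l.getD 2 0)
      have lp0 := relPos_lt' η p
      have lc1 := relPos_lt' η (l.getD 2 0)
      rcases hcross1 with ⟨o1, o2, o3⟩ | ⟨o1, o2, o3⟩ <;> omega
    -- base-ζ coordinates
    have hrevζ := relPos_rev' hζηne
    have hζc1 : relPos n ζ (l.getD 2 0) = n + relPos n η (l.getD 2 0) - relPos n η ζ :=
      (relPos_chg hζηne).2 (by omega)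
    have hζβ' : relPos n ζ β = n + relPos n η β - relPos n η ζ :=
      (relPos_chg hζηne).2 (by omega)
    have hζη' : relPos n ζ η = n - relPos n η ζ := by omega
    refine ⟨hlen3, ?_⟩
    intro i hi hilen
    have hstD : s(l.getD i 0, l.getD (i+1) 0) ∈ D := hDst i hi hilen
    have hcri := hT1 i hi hilen
    rcases hDmem _ _ hstD with ⟨hxx, hyy⟩ | ⟨hxx, hyy⟩ | hD2i
    · -- step i is (ζ, η) : impossible
      exfalso
      rcases hrp with hrp0 | ⟨hp1, hp2⟩
      · have hpη : p = η := relPos_eq_zero_iff'.mp hrp0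
        obtain ⟨s0, -, -, -, E2, ht0, ht1⟩ := crossesAt_extract hcri
        rw [hxx, hyy, hpη, cr_third_right] at E2
        have hz : T i * cr (vtx n ζ) (vtx n η) (vtx n β) = 0 := by linarith
        rcases mul_eq_zero.mp hz with h | h
        · linarith
        · exact cr_eq_zero_vtx (Ne.symm hζηne) hβζ hβη h
      · have hi1 : i ≠ 1 := by
          intro h
          rw [h] at hyy
          exact hl2η hyy
        have hio := Nat.odd_iff.mp hi
        have hTlt : T 1 < T i := hT2 1 i odd_one hi (by omega) hilen
        obtain ⟨-, -, v1, -, -, heq1⟩ := hcr1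
        obtain ⟨-, -, u1, hu0, hu1, heqi⟩ := hcri
        have hζp' : relPos n ζ p = relPos n η p - relPos n η ζ :=
          (relPos_chg hζηne).1 (by omega)
        refine no_late ?_ ?_ ?_ hTlt heq1 heqi hu0 hu1
        · exact cr_neg_of (by omega) (by omega)
        · exact cr_pos_of (by omega) (by omega)
        · constructor
          · rw [hxx]; exact (cr_third_left _ _).le
          · rw [hyy]; exact (cr_neg_of (by omega) (by omega)).le
    · -- step i is (η, ζ) : impossible
      exfalso
      rcases hrp with hrp0 | ⟨hp1, hp2⟩
      · have hpη : p = η := relPos_eq_zero_iff'.mp hrp0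
        obtain ⟨s0, -, -, -, E2, ht0, ht1⟩ := crossesAt_extract hcri
        rw [hxx, hyy, hpη, cr_third_left] at E2
        have hz : T i * cr (vtx n η) (vtx n ζ) (vtx n β) = 0 := by linarith
        rcases mul_eq_zero.mp hz with h | h
        · linarith
        · exact cr_eq_zero_vtx hζηne hβη hβζ h
      · have hi1 : i ≠ 1 := by
          intro h
          rw [h] at hxx
          rw [h1] at hxx
          exact hζηne hxx
        have hio := Nat.odd_iff.mp hi
        have hTlt : T 1 < T i := hT2 1 i odd_one hi (by omega) hilen
        obtain ⟨-, -, v1, -, -, heq1⟩ := hcr1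
        obtain ⟨-, -, u1, hu0, hu1, heqi⟩ := hcri
        have hζp' : relPos n ζ p = relPos n η p - relPos n η ζ :=
          (relPos_chg hζηne).1 (by omega)
        refine no_late ?_ ?_ ?_ hTlt heq1 heqi hu0 hu1
        · exact cr_neg_of (by omega) (by omega)
        · exact cr_pos_of (by omega) (by omega)
        · constructor
          · rw [hxx]; exact (cr_neg_of (by omega) (by omega)).le
          · rw [hyy]; exact (cr_third_left _ _).le
    · -- step i is in D₂
      obtain ⟨hxV, hyV, hxyne⟩ := hV2 _ _ hD2i
      have hηdiag : ∀ w : ZMod n, relPos n η β ≤ relPos n η w →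
          relPos n η w ≤ relPos n η ζ → w ≠ ζ → s(η, w) ∈ D → False := by
        intro w hw1 hw2 hwζ hmem
        have hwZ : relPos n η w ≠ relPos n η ζ := fun h => hwζ (relPos_inj' h)
        have hζw : relPos n ζ w = n + relPos n η w - relPos n η ζ :=
          (relPos_chg hζηne).2 (by omega)
        exact hnoc ζ (l.getD 2 0) η w hst1D hmem
          (Or.inl ⟨by omega, by omega, by omega⟩)
      obtain ⟨s0, hs00, hs01, E1, E2, ht0, ht1⟩ := crossesAt_extract hcri
      have hxβ : l.getD i 0 ≠ β := by
        intro hxe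
        rw [hxe, cr_third_right] at E1
        have hyz : cr (vtx n p) (vtx n β) (vtx n (l.getD (i+1) 0)) = 0 := by
          have hz : s0 * cr (vtx n p) (vtx n β) (vtx n (l.getD (i+1) 0)) = 0 := by linarith
          rcases mul_eq_zero.mp hz with h | h
          · linarith
          · exact h
        have hyβ2 : l.getD (i+1) 0 ≠ β := fun h => hxyne (by rw [h, ← hxe])
        by_cases hyp2 : l.getD (i+1) 0 = p
        · rcases hrp with hrp0 | ⟨hp1, hp2⟩
          · have hpη : p = η := relPos_eq_zero_iff'.mp hrp0
            apply hηdiag β le_rfl (by omega) hβζ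
            have hmem2 : s(η, β) ∈ D₂ := by
              rw [Sym2.eq_swap]
              rw [hxe, hyp2, hpη] at hD2i
              exact hD2i
            exact hD2sub hmem2
          · have := congrArg (relPos n η) hyp2; omega
        · exact cr_eq_zero_vtx hβp hyp2 hyβ2 hyz
      have hyβ : l.getD (i+1) 0 ≠ β := by
        intro hye
        rw [hye, cr_third_right] at E1
        have hxz : cr (vtx n p) (vtx n β) (vtx n (l.getD i 0)) = 0 := by
          have hz : (1 - s0) * cr (vtx n p) (vtx n β) (vtx n (l.getD i 0)) = 0 := by linarith
          rcases mul_eq_zero.mp hz with h | h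
          · linarith
          · exact h
        by_cases hxp2 : l.getD i 0 = p
        · rcases hrp with hrp0 | ⟨hp1, hp2⟩
          · have hpη : p = η := relPos_eq_zero_iff'.mp hrp0
            apply hηdiag β le_rfl (by omega) hβζ
            have : s(η, β) ∈ D₂ := by
              rw [hxp2, hye, hpη] at hD2i
              exact hD2i
            exact hD2sub this
          · have := congrArg (relPos n η) hxp2; omega
        · exact cr_eq_zero_vtx hβp hxp2 hxβ hxz
      have hxp : l.getD i 0 ≠ p := by
        intro hxe
        rcases hrp with hrp0 | ⟨hp1, hp2⟩
        · rw [hxe, cr_third_left] at E2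
          have hyz : cr (vtx n p) (vtx n (l.getD (i+1) 0)) (vtx n β) = 0 := by
            have hz : T i * cr (vtx n p) (vtx n (l.getD (i+1) 0)) (vtx n β) = 0 := by
              linarith
            rcases mul_eq_zero.mp hz with h | h
            · linarith
            · exact h
          have hyp2 : l.getD (i+1) 0 ≠ p := fun h => hxyne (by rw [hxe, h])
          exact cr_eq_zero_vtx hyp2 (fun h => hβp h) (fun h => hyβ h.symm) hyz
        · have := congrArg (relPos n η) hxe; omega
      have hyp' : l.getD (i+1) 0 ≠ p := by
        intro hye
        rcases hrp with hrp0 | ⟨hp1, hp2⟩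
        · rw [hye, cr_third_right] at E2
          have hxz : cr (vtx n (l.getD i 0)) (vtx n p) (vtx n β) = 0 := by
            have hz : T i * cr (vtx n (l.getD i 0)) (vtx n p) (vtx n β) = 0 := by linarith
            rcases mul_eq_zero.mp hz with h | h
            · linarith
            · exact h
          exact cr_eq_zero_vtx (fun h => hxp h.symm) (fun h => hxβ h.symm) hβp hxz
        · have := congrArg (relPos n η) hye; omega
      have hcross : Crosses n p β (l.getD i 0) (l.getD (i+1) 0) :=
        crosses_of_crossesAt hβp hxp hxβ hyp' hyβ hcri
      have epx := relPos_add_cases' η p (l.getD i 0)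
      have epy := relPos_add_cases' η p (l.getD (i+1) 0)
      have epβ := relPos_add_cases' η p β
      have lpx := relPos_lt' p (l.getD i 0)
      have lpy := relPos_lt' p (l.getD (i+1) 0)
      have lpβ := relPos_lt' p β
      have lp0 := relPos_lt' η p
      have lhx := relPos_lt' η (l.getD i 0)
      have lhy := relPos_lt' η (l.getD (i+1) 0)
      rcases hcross with ⟨o1, o2, o3⟩ | ⟨o1, o2, o3⟩
      · by_cases hx0 : relPos n η (l.getD i 0) = 0
        · exfalso
          have hxη : l.getD i 0 = η := relPos_eq_zero_iff'.mp hx0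
          have hyζ : l.getD (i+1) 0 ≠ ζ := by
            intro hye
            rw [hxη, hye] at hD2i
            exact hdm (by rwa [Sym2.eq_swap] at hD2i)
          apply hηdiag (l.getD (i+1) 0) (by omega) (by omega) hyζ
          rw [hxη] at hD2i
          exact hD2sub hD2i
        · exact Or.inl ⟨by omega, by omega, by omega, by omega⟩
      · by_cases hy0 : relPos n η (l.getD (i+1) 0) = 0
        · exfalso
          have hyη : l.getD (i+1) 0 = η := relPos_eq_zero_iff'.mp hy0
          have hxζ : l.getD i 0 ≠ ζ := by
            intro hxe
            rw [hxe, hyη] at hD2i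
            exact hdm hD2i
          apply hηdiag (l.getD i 0) (by omega) (by omega) hxζ
          have : s(η, l.getD i 0) ∈ D₂ := by
            rw [Sym2.eq_swap]
            rwa [hyη] at hD2i
          exact hD2sub this
        · exact Or.inr ⟨by omega, by omega, by omega, by omega⟩
  -- ===================== order transfer =====================
  have htrans : ∀ (p q x y x' y' : ZMod n) (t t' s s' : ℝ),
      (p = η ∨ (relPos n η ζ < relPos n η p ∧ relPos n η p < n)) →
      (q = η ∨ (relPos n η ζ < relPos n η q ∧ relPos n η q < n)) →
      s(x, y) ∈ D → s(x', y') ∈ D →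
      (EarCls n η β ζ x y ∨ EarCls n η β ζ y x) →
      (EarCls n η β ζ x' y' ∨ EarCls n η β ζ y' x') →
      CrossesAt n p β x y t → CrossesAt n p β x' y' t' → t < t' →
      CrossesAt n q β x y s → CrossesAt n q β x' y' s' → s < s' := by
    intro p q x y x' y' t t' s s' hp hq hd1 hd2 hc1 hc2 hA1 hA2 htt hB1' hB2'
    have hsw1 : s(y, x) ∈ D := by rwa [Sym2.eq_swap]
    have hsw2 : s(y', x') ∈ D := by rwa [Sym2.eq_swap]
    rcases hc2 with hc2 | hc2 <;> rcases hc1 with hc1 | hc1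
    · exact ear_core_transfer hβ.2 hp hq hc1 hc2 (hnoc x' y' x y hd2 hd1)
        (hnoc x' y' y x hd2 hsw1) hA1 hA2 htt hB1' hB2'
    · exact ear_core_transfer hβ.2 hp hq hc1 hc2 (hnoc x' y' y x hd2 hsw1)
        (hnoc x' y' x y hd2 hd1) (crossesAt_swap_cd hA1) hA2 htt
        (crossesAt_swap_cd hB1') hB2'
    · exact ear_core_transfer hβ.2 hp hq hc1 hc2 (hnoc y' x' x y hsw2 hd1)
        (hnoc y' x' y x hsw2 hsw1) hA1 (crossesAt_swap_cd hA2) htt hB1'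
        (crossesAt_swap_cd hB2')
    · exact ear_core_transfer hβ.2 hp hq hc1 hc2 (hnoc y' x' y x hsw2 hsw1)
        (hnoc y' x' x y hsw2 hd1) (crossesAt_swap_cd hA1) (crossesAt_swap_cd hA2) htt
        (crossesAt_swap_cd hB1') (crossesAt_swap_cd hB2')
  constructor
  · -- ===================== the bijection =====================
    refine ⟨?_, ?_, ?_⟩
    · -- MapsTo
      intro l hl
      simp only [Set.mem_setOf_eq] at hl ⊢
      obtain ⟨hTP, h1, h2⟩ := hl
      obtain ⟨hlen3, hclsStep⟩ := classify α l hTP h1 (Or.inr ⟨hArange.1, hArange.2, h2⟩)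
      obtain ⟨hlen, hget0, hlast, hWm, hadj, hpair, hncr, hDst, T, hT1, hT2⟩ := hTP
      have hlnil : l ≠ [] := by intro h; rw [h] at hlen; simp at hlen
      have hρget := cons_tail_getD η (0 : ZMod n) l hlnil
      have hρlen := cons_tail_length η l hlnil
      have hρ0 : (η :: l.tail).getD 0 0 = η := rfl
      have hηfree : ∀ k, 1 ≤ k → k < l.length → l.getD k 0 ≠ η := by
        intro k hk1 hk2
        rcases eq_or_ne k (l.length - 1) with hkl | hkl
        · rw [hkl, hlast]; exact hβη
        · rcases Nat.even_or_odd k with hke | hko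
          · have hke' := Nat.even_iff.mp hke
            have hodd : Odd (k - 1) := Nat.odd_iff.mpr (by omega)
            have hcl := hclsStep (k-1) hodd (by omega)
            rw [show k - 1 + 1 = k from by omega] at hcl
            intro h
            rw [h] at hcl
            rcases hcl with ⟨-, -, c, -⟩ | ⟨c, -, -, -⟩ <;> rw [relPos_self'] at c <;> omega
          · have hcl := hclsStep k hko (by omega)
            intro h
            rw [h] at hcl
            rcases hcl with ⟨c, -, -, -⟩ | ⟨-, -, c, -⟩ <;> rw [relPos_self'] at c <;> omega
      refine ⟨⟨?_, ?_, ?_, ?_, ?_, ?_, ?_, ?_, ?_⟩, ?_⟩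
      · rw [hρlen]; omega
      · exact hρ0
      · rw [hρlen]
        have h2' : l.length - 1 = (l.length - 2) + 1 := by omega
        rw [h2', hρget]
        rw [← h2']
        exact hlast
      · intro i hi; exact Set.mem_univ _
      · intro i hilen
        rw [hρlen] at hilen
        cases i with
        | zero =>
          rw [hρ0, hρget 0, h1]
          exact fun h => hζηne h.symm
        | succ m =>
          rw [hρget m, hρget (m+1)]
          exact hadj (m+1) hilen
      · intro i j hij hjlen
        rw [hρlen] at hjlen
        obtain ⟨k, rfl⟩ : ∃ k, j = k + 1 := ⟨j - 1, by omega⟩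
        rw [hρget k, hρget (k+1)]
        cases i with
        | zero =>
          rw [hρ0, hρget 0, h1]
          intro heq
          rw [Sym2.eq_iff] at heq
          rcases heq with ⟨he, -⟩ | ⟨he, -⟩
          · exact hηfree (k+1) (by omega) (by omega) he.symm
          · exact hηfree (k+2) (by omega) (by omega) he.symm
        | succ m =>
          rw [hρget m, hρget (m+1)]
          exact hpair (m+1) (k+1) hij hjlen
      · intro i hilen c d hcd
        rw [hρlen] at hilen
        cases i with
        | zero =>
          rw [hρ0, hρget 0, h1]
          exact hnoc η ζ c d (by rw [Sym2.eq_swap]; exact hζηD) hcd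
        | succ m =>
          rw [hρget m, hρget (m+1)]
          exact hncr (m+1) hilen c d hcd
      · intro i hi hilen
        rw [hρlen] at hilen
        obtain ⟨k, rfl⟩ : ∃ k, i = k + 1 := ⟨i - 1, by have := Nat.odd_iff.mp hi; omega⟩
        rw [hρget k, hρget (k+1)]
        exact hDst (k+1) hi hilen
      · -- the crossing function for the new path
        have hex : ∀ i : ℕ, ∃ r : ℝ, Odd i → i + 1 < l.length →
            CrossesAt n η β (l.getD i 0) (l.getD (i+1) 0) r := by
          intro i
          by_cases hcase : Odd i ∧ i + 1 < l.length
          · obtain ⟨r, hr⟩ := ear_exists hβ.1 hβ.2 (Or.inl rfl)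
              (hclsStep i hcase.1 hcase.2)
            exact ⟨r, fun _ _ => hr⟩
          · exact ⟨0, fun h1' h2' => absurd ⟨h1', h2'⟩ hcase⟩
        choose T' hT' using hex
        refine ⟨T', ?_, ?_⟩
        · intro i hi hilen
          rw [hρlen] at hilen
          obtain ⟨k, rfl⟩ : ∃ k, i = k + 1 := ⟨i - 1, by have := Nat.odd_iff.mp hi; omega⟩
          rw [hρget k, hρget (k+1)]
          exact hT' (k+1) hi hilen
        · intro i j hi hj hij hjlen
          rw [hρlen] at hjlen
          have hilen : i + 1 < l.length := by omega
          exact htrans α η (l.getD i 0) (l.getD (i+1) 0) (l.getD j 0) (l.getD (j+1) 0)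
            (T i) (T j) (T' i) (T' j)
            (Or.inr ⟨hArange.1, hArange.2⟩) (Or.inl rfl)
            (hDst i hi hilen) (hDst j hj hjlen)
            (hclsStep i hi hilen) (hclsStep j hj hjlen)
            (hT1 i hi hilen) (hT1 j hj hjlen) (hT2 i j hi hj hij hjlen)
            (hT' i hi hilen) (hT' j hj hjlen)
      · rw [hρget 0]; exact h1
    · -- InjOn
      intro l1 hl1 l2 hl2 heq
      simp only [Set.mem_setOf_eq] at hl1 hl2
      have he1 : l1 = α :: l1.tail := by
        obtain ⟨⟨hlen, hget0, -⟩, -, -⟩ := hl1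
        cases l1 with
        | nil => simp at hlen
        | cons a t => rw [← hget0]; rfl
      have he2 : l2 = α :: l2.tail := by
        obtain ⟨⟨hlen, hget0, -⟩, -, -⟩ := hl2
        cases l2 with
        | nil => simp at hlen
        | cons a t => rw [← hget0]; rfl
      have htails : l1.tail = l2.tail := by
        have := congrArg List.tail heq
        simpa using this
      rw [he1, he2, htails]
    · -- SurjOn
      intro ρ hρ
      simp only [Set.mem_setOf_eq] at hρ
      obtain ⟨hTPρ, h1ρ⟩ := hρ
      obtain ⟨hlen3ρ, hclsStepρ⟩ := classify η ρ hTPρ h1ρ (Or.inl rfl)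
      obtain ⟨hlenρ, hget0ρ, hlastρ, hWmρ, hadjρ, hpairρ, hncrρ, hDstρ, Tρ, hT1ρ, hT2ρ⟩ := hTPρ
      have hρnil : ρ ≠ [] := by intro h; rw [h] at hlenρ; simp at hlenρ
      have hπget := cons_tail_getD α (0 : ZMod n) ρ hρnil
      have hπlen := cons_tail_length α ρ hρnil
      have hπ0 : (α :: ρ.tail).getD 0 0 = α := rfl
      have h2ρ : ρ.getD 2 0 ≠ η := by
        have hcl := hclsStepρ 1 odd_one (by omega)
        rw [h1ρ] at hcl
        intro h
        have h' : relPos n η (ρ.getD (1+1) 0) = 0 := by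
          rw [show (1+1 : ℕ) = 2 from rfl, h]; exact relPos_self' η
        rcases hcl with ⟨-, c, -, -⟩ | ⟨c, -, -, -⟩ <;> omega
      have hαfree : ∀ k, 1 ≤ k → k < ρ.length →
          relPos n η (ρ.getD k 0) ≤ relPos n η ζ := by
        intro k hk1 hk2
        rcases eq_or_ne k (ρ.length - 1) with hkl | hkl
        · rw [hkl, hlastρ]; omega
        · rcases Nat.even_or_odd k with hke | hko
          · have hke' := Nat.even_iff.mp hke
            have hodd : Odd (k - 1) := Nat.odd_iff.mpr (by omega)
            have hcl := hclsStepρ (k-1) hodd (by omega)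
            rw [show k - 1 + 1 = k from by omega] at hcl
            rcases hcl with ⟨-, -, -, c⟩ | ⟨-, c, -, -⟩ <;> omega
          · have hcl := hclsStepρ k hko (by omega)
            rcases hcl with ⟨-, c, -, -⟩ | ⟨-, -, -, c⟩ <;> omega
      have hαnot : ∀ k, 1 ≤ k → k < ρ.length → ρ.getD k 0 ≠ α := by
        intro k hk1 hk2 h
        have := hαfree k hk1 hk2
        rw [h] at this
        omega
      have hstep0 : ∀ c d : ZMod n, s(c, d) ∈ D → ¬ Crosses n α ζ c d := by
        intro c d hcd
        have hrevζ := relPos_rev' hζηne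
        rcases hDmem c d hcd with ⟨hc, hd⟩ | ⟨hc, hd⟩ | hcd2
        · rw [hc, hd]
          rintro (⟨o1, o2, o3⟩ | ⟨o1, o2, o3⟩) <;> omega
        · rw [hc, hd]
          rintro (⟨o1, o2, o3⟩ | ⟨o1, o2, o3⟩) <;> omega
        · obtain ⟨hcV, hdV, -⟩ := hV2 _ _ hcd2
          have e1 := (relPos_chg (x := c) hαη).2 (by omega)
          have e2 := (relPos_chg (x := d) hαη).2 (by omega)
          have e3 := (relPos_chg (x := ζ) hαη).2 (by omega)
          rintro (⟨o1, o2, o3⟩ | ⟨o1, o2, o3⟩) <;> omega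
      refine ⟨α :: ρ.tail, ⟨⟨?_, ?_, ?_, ?_, ?_, ?_, ?_, ?_, ?_⟩, ?_, ?_⟩, ?_⟩
      · rw [hπlen]; omega
      · exact hπ0
      · rw [hπlen]
        have h2' : ρ.length - 1 = (ρ.length - 2) + 1 := by omega
        rw [h2', hπget]
        rw [← h2']
        exact hlastρ
      · intro i hi; exact Set.mem_univ _
      · intro i hilen
        rw [hπlen] at hilen
        cases i with
        | zero =>
          rw [hπ0, hπget 0, h1ρ]
          exact hαζ
        | succ m =>
          rw [hπget m, hπget (m+1)]
          exact hadjρ (m+1) hilen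
      · intro i j hij hjlen
        rw [hπlen] at hjlen
        obtain ⟨k, rfl⟩ : ∃ k, j = k + 1 := ⟨j - 1, by omega⟩
        rw [hπget k, hπget (k+1)]
        cases i with
        | zero =>
          rw [hπ0, hπget 0, h1ρ]
          intro heq
          rw [Sym2.eq_iff] at heq
          rcases heq with ⟨he, -⟩ | ⟨he, -⟩
          · exact hαnot (k+1) (by omega) (by omega) he.symm
          · exact hαnot (k+2) (by omega) (by omega) he.symm
        | succ m =>
          rw [hπget m, hπget (m+1)]
          exact hpairρ (m+1) (k+1) hij hjlen
      · intro i hilen c d hcd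
        rw [hπlen] at hilen
        cases i with
        | zero =>
          rw [hπ0, hπget 0, h1ρ]
          exact hstep0 c d hcd
        | succ m =>
          rw [hπget m, hπget (m+1)]
          exact hncrρ (m+1) hilen c d hcd
      · intro i hi hilen
        rw [hπlen] at hilen
        obtain ⟨k, rfl⟩ : ∃ k, i = k + 1 := ⟨i - 1, by have := Nat.odd_iff.mp hi; omega⟩
        rw [hπget k, hπget (k+1)]
        exact hDstρ (k+1) hi hilen
      · have hex : ∀ i : ℕ, ∃ r : ℝ, Odd i → i + 1 < ρ.length →
            CrossesAt n α β (ρ.getD i 0) (ρ.getD (i+1) 0) r := by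
          intro i
          by_cases hcase : Odd i ∧ i + 1 < ρ.length
          · obtain ⟨r, hr⟩ := ear_exists hβ.1 hβ.2 (Or.inr ⟨hArange.1, hArange.2⟩)
              (hclsStepρ i hcase.1 hcase.2)
            exact ⟨r, fun _ _ => hr⟩
          · exact ⟨0, fun h1' h2' => absurd ⟨h1', h2'⟩ hcase⟩
        choose T' hT' using hex
        refine ⟨T', ?_, ?_⟩
        · intro i hi hilen
          rw [hπlen] at hilen
          obtain ⟨k, rfl⟩ : ∃ k, i = k + 1 := ⟨i - 1, by have := Nat.odd_iff.mp hi; omega⟩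
          rw [hπget k, hπget (k+1)]
          exact hT' (k+1) hi hilen
        · intro i j hi hj hij hjlen
          rw [hπlen] at hjlen
          have hilen : i + 1 < ρ.length := by omega
          exact htrans η α (ρ.getD i 0) (ρ.getD (i+1) 0) (ρ.getD j 0) (ρ.getD (j+1) 0)
            (Tρ i) (Tρ j) (T' i) (T' j)
            (Or.inl rfl) (Or.inr ⟨hArange.1, hArange.2⟩)
            (hDstρ i hi hilen) (hDstρ j hj hjlen)
            (hclsStepρ i hi hilen) (hclsStepρ j hj hjlen)
            (hT1ρ i hi hilen) (hT1ρ j hj hjlen) (hT2ρ i j hi hj hij hjlen)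
            (hT' i hi hilen) (hT' j hj hjlen)
      · rw [hπget 0]; exact h1ρ
      · rw [show (2:ℕ) = 1 + 1 from rfl, hπget 1]; exact h2ρ
      · show η :: (α :: ρ.tail).tail = ρ
        cases ρ with
        | nil => exact absurd rfl hρnil
        | cons a t =>
          have : a = η := hget0ρ
          rw [this]
          rfl
  · -- ===================== the weight identity =====================
    intro l hTP h1 _h2
    obtain ⟨hlen, hget0, -, -, -, -, -, -, -⟩ := hTP
    have hlnil : l ≠ [] := by intro h; rw [h] at hlen; simp at hlen
    have hρget := cons_tail_getD η (0 : ZMod n) l hlnil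
    have hρlen := cons_tail_length η l hlnil
    have hρ0 : (η :: l.tail).getD 0 0 = η := rfl
    unfold pathWeight
    rw [hρlen]
    have h0mem : (0:ℕ) ∈ (Finset.range (l.length - 1)).filter (fun i => Even i) := by
      rw [Finset.mem_filter, Finset.mem_range]
      exact ⟨by omega, Even.zero⟩
    rw [← Finset.mul_prod_erase _
        (fun i => f ((η :: l.tail).getD i 0) ((η :: l.tail).getD (i+1) 0)) h0mem,
      ← Finset.mul_prod_erase _
        (fun i => f (l.getD i 0) (l.getD (i+1) 0)) h0mem]
    have hN : ∏ i ∈ ((Finset.range (l.length - 1)).filter (fun i => Even i)).erase 0,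
          f ((η :: l.tail).getD i 0) ((η :: l.tail).getD (i+1) 0)
        = ∏ i ∈ ((Finset.range (l.length - 1)).filter (fun i => Even i)).erase 0,
          f (l.getD i 0) (l.getD (i+1) 0) := by
      apply Finset.prod_congr rfl
      intro i hi
      have hi0 : i ≠ 0 := (Finset.mem_erase.mp hi).1
      obtain ⟨k, rfl⟩ : ∃ k, i = k + 1 := ⟨i - 1, by omega⟩
      rw [hρget k, hρget (k+1)]
    have hDen : ∏ i ∈ (Finset.range (l.length - 1)).filter (fun i => Odd i),
          f ((η :: l.tail).getD i 0) ((η :: l.tail).getD (i+1) 0)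
        = ∏ i ∈ (Finset.range (l.length - 1)).filter (fun i => Odd i),
          f (l.getD i 0) (l.getD (i+1) 0) := by
      apply Finset.prod_congr rfl
      intro i hi
      have hio : Odd i := (Finset.mem_filter.mp hi).2
      obtain ⟨k, rfl⟩ : ∃ k, i = k + 1 := ⟨i - 1, by have := Nat.odd_iff.mp hio; omega⟩
      rw [hρget k, hρget (k+1)]
    rw [hN, hDen]
    have hg0 : f ((η :: l.tail).getD 0 0) ((η :: l.tail).getD (0+1) 0) = f η ζ := by
      rw [hρ0, hρget 0, h1]
    have hg0' : f (l.getD 0 0) (l.getD (0+1) 0) = f α ζ := by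
      rw [hget0, h1]
    rw [hg0, hg0']
    exact group_calc _ _ _ _
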